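/- If \mathcal{F} \subseteq S_n is an intersecting family of permutations, then |\mathcal{F}| \le (n-1)!. -/

import Mathlib

open Fin.NatCast

lemma finRotate_pow_apply (m k : ℕ) (i : Fin (m+1)) :
    ((finRotate (m+1)) ^ k) i = i + (k : Fin (m+1)) := by
  induction k with
  | zero => simp
  | succ k ih =>
    rw [pow_succ', Equiv.Perm.mul_apply, ih, finRotate_succ_apply]
    push_cast
    rw [add_assoc]

lemma decomposeFin_fst (m : ℕ) (π : Equiv.Perm (Fin (m+1))) :
    (Equiv.Perm.decomposeFin π).1 = π 0 := by
  conv_rhs => rw [← Equiv.Perm.decomposeFin.symm_apply_apply π]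
  rw [Equiv.Perm.decomposeFin_symm_apply_zero]

theorem deza_frankl (n : ℕ) (F : Finset (Equiv.Perm (Fin n)))
    (hint : ∀ σ ∈ F, ∀ π ∈ F, ∃ i : Fin n, σ i = π i) :
    F.card ≤ (n - 1).factorial := by
  match n with
  | 0 =>
    have : F.card ≤ Fintype.card (Equiv.Perm (Fin 0)) := Finset.card_le_univ F
    simpa using this
  | m + 1 =>
    set c := finRotate (m+1) with hc
    set f : Equiv.Perm (Fin (m+1)) → Equiv.Perm (Fin (m+1)) :=
      fun σ => σ * c ^ ((σ⁻¹ 0 : Fin (m+1)) : ℕ) with hf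
    have hf0 : ∀ σ, f σ 0 = 0 := by
      intro σ
      simp only [hf, Equiv.Perm.mul_apply, hc, finRotate_pow_apply, zero_add,
        Fin.cast_val_eq_self, Equiv.Perm.inv_def, Equiv.apply_symm_apply]
    have hfinj : ∀ σ ∈ F, ∀ π ∈ F, f σ = f π → σ = π := by
      intro σ hσ π hπ heq
      obtain ⟨i, hi⟩ := hint σ hσ π hπ
      set a : ℕ := ((σ⁻¹ 0 : Fin (m+1)) : ℕ) with ha
      set b : ℕ := ((π⁻¹ 0 : Fin (m+1)) : ℕ) with hb
      have hσ' : σ = f σ * (c ^ a)⁻¹ := by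
        simp [hf, ha, mul_assoc]
      have hπ' : π = f π * (c ^ b)⁻¹ := by
        simp [hf, hb, mul_assoc]
      have hab : a = b := by
        have h1 : f σ ((c ^ a)⁻¹ i) = f π ((c ^ b)⁻¹ i) := by
          rw [← Equiv.Perm.mul_apply, ← Equiv.Perm.mul_apply, ← hσ', ← hπ', hi]
        rw [← heq] at h1
        have h2 : (c ^ a)⁻¹ i = (c ^ b)⁻¹ i := (f σ).injective h1
        have e1 : (c ^ a)⁻¹ i + (a : Fin (m+1)) = i := by
          have := finRotate_pow_apply m a ((c ^ a)⁻¹ i)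
          rw [← hc] at this
          rw [← this, Equiv.Perm.inv_def, Equiv.apply_symm_apply]
        have e2 : (c ^ b)⁻¹ i + (b : Fin (m+1)) = i := by
          have := finRotate_pow_apply m b ((c ^ b)⁻¹ i)
          rw [← hc] at this
          rw [← this, Equiv.Perm.inv_def, Equiv.apply_symm_apply]
        have h3 : (c ^ a)⁻¹ i + (a : Fin (m+1)) = (c ^ b)⁻¹ i + (b : Fin (m+1)) := by
          rw [e1, e2]
        rw [h2] at h3
        have h4 : (a : Fin (m+1)) = (b : Fin (m+1)) := add_left_cancel h3
        have : ((a : Fin (m+1)) : ℕ) = ((b : Fin (m+1)) : ℕ) := by rw [h4]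
        simpa [ha, hb, Fin.cast_val_eq_self] using this
      rw [hσ', hπ', heq, hab]
    set g : Equiv.Perm (Fin (m+1)) → Equiv.Perm (Fin m) :=
      fun σ => (Equiv.Perm.decomposeFin (f σ)).2 with hg
    have hginj : Set.InjOn g F := by
      intro σ hσ π hπ heq
      apply hfinj σ hσ π hπ
      have h1 : Equiv.Perm.decomposeFin (f σ) = Equiv.Perm.decomposeFin (f π) := by
        apply Prod.ext
        · rw [decomposeFin_fst, decomposeFin_fst, hf0, hf0]
        · exact heq
      exact Equiv.Perm.decomposeFin.injective h1
    calc F.card = (F.image g).card := (Finset.card_image_of_injOn hginj).symm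
      _ ≤ Fintype.card (Equiv.Perm (Fin m)) := Finset.card_le_univ _
      _ = m.factorial := by simp [Fintype.card_perm]
      _ = (m + 1 - 1).factorial := by simp
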